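/- Let K be a field equipped with a set M of absolute values satisfying the product formula (∏_{v∈M}|x|_v = 1 for all x ∈ K^×, with all but finitely many factors equal to 1), and suppose all v ∈ M are non-archimedean with |m|_v = 1 for integers 2 ≤ m ≤ d. Let d ≥ 3 and c₁,…,c_{d−1} ∈ K satisfy c₁⋯c_{d−1} = (−1)^{d−1}λ with λ ∈ K^× and |λ|_v = 1 for all v. Let S = {v ∈ M : 5 log|c₁|_v < log‖c‖_v}. If log⁺‖c‖_v = 0 for every v ∈ S, then h(c) := ∑_{v∈M} log⁺‖c‖_v = 0. -/

import Mathlib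

open Real

/-- over a product-formula field whose places are all non-archimedean with
`|m|_v = 1` for `2 ≤ m ≤ d`, if `c₁⋯c_{d−1} = (−1)^{d−1}λ` with `|λ|_v = 1` for all `v`,
and `log⁺‖c‖_v = 0` for every `v` in `S = {v : 5log|c₁|_v < log‖c‖_v}`, then
`h(c) = ∑_v log⁺‖c‖_v = 0`. -/
theorem height_zero_of_S_trivial {K : Type*} [Field K] {V : Type*}
    (av : V → AbsoluteValue K ℝ)
    (hna : ∀ v, ∀ x y : K, av v (x + y) ≤ max (av v x) (av v y))
    (d : ℕ) (hd : 3 ≤ d)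
    (hint : ∀ v, ∀ m : ℕ, 2 ≤ m → m ≤ d → av v ((m : ℕ) : K) = 1)
    (hfin : ∀ x : K, x ≠ 0 → {v | av v x ≠ 1}.Finite)
    (hprod : ∀ x : K, x ≠ 0 → ∏ᶠ v, av v x = 1)
    (c : Fin (d - 1) → K) (lam : K) (hlam : lam ≠ 0)
    (hrel : ∏ i, c i = (-1) ^ (d - 1) * lam)
    (hlamv : ∀ v, av v lam = 1)
    (cnorm : V → ℝ)
    (hcnorm : ∀ v, cnorm v = Finset.univ.sup'
      (Finset.univ_nonempty_iff.mpr ⟨(⟨0, by omega⟩ : Fin (d - 1))⟩) (fun i => av v (c i)))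
    (S : Set V) (hS : S = {v | 5 * Real.log (av v (c ⟨0, by omega⟩)) < Real.log (cnorm v)})
    (hStriv : ∀ v ∈ S, max 0 (Real.log (cnorm v)) = 0) :
    ∑ᶠ v, max 0 (Real.log (cnorm v)) = 0 := by
  classical
  set i0 : Fin (d - 1) := ⟨0, by omega⟩ with hi0
  -- each c i is nonzero
  have hprodne : (∏ i, c i) ≠ 0 := by
    rw [hrel]
    exact mul_ne_zero (pow_ne_zero _ (neg_ne_zero.mpr one_ne_zero)) hlam
  have hc : ∀ i, c i ≠ 0 := fun i hi =>
    hprodne (Finset.prod_eq_zero (Finset.mem_univ i) hi)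
  -- the finite set F
  have hFfin : (⋃ i, {v | av v (c i) ≠ 1}).Finite :=
    Set.finite_iUnion (fun i => hfin (c i) (hc i))
  set F : Finset V := hFfin.toFinset with hF
  have hmemF : ∀ v i, av v (c i) ≠ 1 → v ∈ F := by
    intro v i h
    simp only [hF, Set.Finite.mem_toFinset, Set.mem_iUnion]
    exact ⟨i, h⟩
  have hne : (Finset.univ : Finset (Fin (d - 1))).Nonempty :=
    Finset.univ_nonempty_iff.mpr ⟨i0⟩
  have hle : ∀ v i, av v (c i) ≤ cnorm v := by
    intro v i
    rw [hcnorm]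
    exact Finset.le_sup' (fun i => av v (c i)) (Finset.mem_univ i)
  have hcnorm_pos : ∀ v, 0 < cnorm v := by
    intro v
    exact lt_of_lt_of_le ((av v).pos (hc i0)) (hle v i0)
  -- outside F, cnorm = 1
  have houtF : ∀ v, v ∉ F → cnorm v = 1 := by
    intro v hv
    have h1 : ∀ i, av v (c i) = 1 := by
      intro i
      by_contra h
      exact hv (hmemF v i h)
    rw [hcnorm]
    exact le_antisymm (Finset.sup'_le _ _ fun i _ => (h1 i).le)
      ((h1 i0).ge.trans (Finset.le_sup' (fun i => av v (c i)) (Finset.mem_univ i0)))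
  -- support of the summand is inside F
  have hsupp : (Function.support fun v => max 0 (Real.log (cnorm v))) ⊆ ↑F := by
    intro v hv
    by_contra h
    apply hv
    simp [houtF v h]
  rw [finsum_eq_finset_sum_of_support_subset _ hsupp]
  -- product formula as a sum of logs over F
  have hlogsum : ∑ v ∈ F, Real.log (av v (c i0)) = 0 := by
    have hms : (Function.mulSupport fun v => av v (c i0)) ⊆ ↑F := by
      intro v hv
      exact hmemF v i0 hv
    have := hprod (c i0) (hc i0)
    rw [finprod_eq_prod_of_mulSupport_subset _ hms] at this
    rw [← Real.log_prod (s := F) (f := fun v => av v (c i0)) (fun v _ => ((av v).pos (hc i0)).ne'), this, Real.log_one]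
  -- product of all absolute values at a place equals 1
  have hprodv : ∀ v, ∏ i, av v (c i) = 1 := by
    intro v
    have : av v (∏ i, c i) = 1 := by
      rw [hrel, map_mul, map_pow, hlamv, mul_one]
      have hneg : av v (-1 : K) = 1 := by
        have := (av v).map_neg (1 : K)
        rw [this, (av v).map_one]
      rw [hneg, one_pow]
    rwa [map_prod] at this
  -- if cnorm v ≤ 1 then av v (c i0) ≥ 1
  have hkey : ∀ v, cnorm v ≤ 1 → 1 ≤ av v (c i0) := by
    intro v hv
    have hsplit : av v (c i0) * ∏ i ∈ Finset.univ.erase i0, av v (c i) = 1 :=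
      (Finset.mul_prod_erase Finset.univ (fun i => av v (c i)) (Finset.mem_univ i0)).trans
        (hprodv v)
    have hrest_pos : 0 < ∏ i ∈ Finset.univ.erase i0, av v (c i) :=
      Finset.prod_pos (fun i _ => (av v).pos (hc i))
    have hrest_le : ∏ i ∈ Finset.univ.erase i0, av v (c i) ≤ 1 := by
      apply Finset.prod_le_one
      · exact fun i _ => ((av v).pos (hc i)).le
      · exact fun i _ => le_trans (hle v i) hv
    nlinarith [(av v).pos (hc i0)]
  -- split F into T and its complement
  set T : Finset V := F.filter (fun v => v ∉ S ∧ 1 ≤ cnorm v) with hT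
  have hTsub : T ⊆ F := Finset.filter_subset _ _
  -- off T (but in F): summand is 0 and cnorm ≤ 1
  have hoffT : ∀ v ∈ F, v ∉ T → max 0 (Real.log (cnorm v)) = 0 := by
    intro v hvF hvT
    rcases Decidable.em (v ∈ S) with hvS | hvS
    · exact hStriv v hvS
    · have : ¬ (1 ≤ cnorm v) := by
        intro h
        exact hvT (Finset.mem_filter.mpr ⟨hvF, hvS, h⟩)
      have : Real.log (cnorm v) ≤ 0 :=
        Real.log_nonpos (hcnorm_pos v).le (le_of_not_ge this)
      exact max_eq_left this
  have hoffT' : ∀ v ∈ F, v ∉ T → cnorm v ≤ 1 := by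
    intro v hvF hvT
    have h := hoffT v hvF hvT
    have : Real.log (cnorm v) ≤ 0 := by
      by_contra hcon
      push_neg at hcon
      rw [max_eq_right hcon.le] at h
      linarith
    exact (Real.log_nonpos_iff (hcnorm_pos v).le).mp this
  -- the sum over F reduces to the sum over T
  have hsum_eq : ∑ v ∈ F, max 0 (Real.log (cnorm v)) = ∑ v ∈ T, max 0 (Real.log (cnorm v)) :=
    (Finset.sum_subset hTsub (fun v hvF hvT => hoffT v hvF hvT)).symm
  -- on T, summand = log cnorm ≤ 5 log |c₁|
  have honT : ∀ v ∈ T, max 0 (Real.log (cnorm v)) ≤ 5 * Real.log (av v (c i0)) := by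
    intro v hvT
    rw [hT, Finset.mem_filter] at hvT
    obtain ⟨hvF, hvS, hv1⟩ := hvT
    have hlognn : 0 ≤ Real.log (cnorm v) := Real.log_nonneg hv1
    rw [max_eq_right hlognn]
    rw [hS] at hvS
    simpa using le_of_not_gt hvS
  -- sum of logs over T is ≤ 0 (using product formula and positivity off T)
  have hTlog : ∑ v ∈ T, Real.log (av v (c i0)) ≤ 0 := by
    have hsplit : ∑ v ∈ F \ T, Real.log (av v (c i0)) + ∑ v ∈ T, Real.log (av v (c i0))
        = ∑ v ∈ F, Real.log (av v (c i0)) := Finset.sum_sdiff hTsub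
    have hpos : 0 ≤ ∑ v ∈ F \ T, Real.log (av v (c i0)) := by
      apply Finset.sum_nonneg
      intro v hv
      rw [Finset.mem_sdiff] at hv
      exact Real.log_nonneg (hkey v (hoffT' v hv.1 hv.2))
    linarith [hlogsum]
  -- conclude
  have hub : ∑ v ∈ F, max 0 (Real.log (cnorm v)) ≤ 0 := by
    rw [hsum_eq]
    calc ∑ v ∈ T, max 0 (Real.log (cnorm v))
        ≤ ∑ v ∈ T, 5 * Real.log (av v (c i0)) := Finset.sum_le_sum honT
      _ = 5 * ∑ v ∈ T, Real.log (av v (c i0)) := by rw [Finset.mul_sum]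
      _ ≤ 0 := by linarith
  have hlb : 0 ≤ ∑ v ∈ F, max 0 (Real.log (cnorm v)) :=
    Finset.sum_nonneg (fun v _ => le_max_left _ _)
  linarith
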